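/- Let μ_1, …, μ_k be a sequence of roots of the root pairing (in the paper, simple roots; repetitions allowed), and let λ ∈ M be a weight. For ε ∈ {0,1}^k set R^{λ,ε} = T_{μ_1}^{ε_1} ∘ T_{μ_2}^{ε_2} ∘ ⋯ ∘ T_{μ_k}^{ε_k}(e^λ) ∈ ℤ[M] (so T_{μ_k}^{ε_k} is applied first). Then e^λ = ∑_{ε ∈ {0,1}^k} R^{λ,ε} · ∏_{1 ≤ i ≤ k, ε_i = 0} (1 − e^{−μ_i}). -/

import Mathlib

/-- The basis element `e^λ` of the group algebra `ℤ[M]`. -/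
noncomputable def expWeight {M : Type*} [AddCommGroup M] (lam : M) :
    AddMonoidAlgebra ℤ M :=
  AddMonoidAlgebra.single lam 1

/-- The value of the Demazure operator `T_β^0` on the basis element `e^λ`,
for the root `β = P.root i`. -/
noncomputable def demazureTerm {ι M N : Type*} [AddCommGroup M] [AddCommGroup N]
    (P : RootPairing ι ℤ M N) (i : ι) (lam : M) : AddMonoidAlgebra ℤ M :=
  if 0 < P.coroot' i lam then
    ∑ j ∈ Finset.range (P.coroot' i lam).toNat, expWeight (lam - (j : ℤ) • P.root i)
  else if P.coroot' i lam < 0 then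
    -∑ j ∈ Finset.Icc 1 (-(P.coroot' i lam)).toNat, expWeight (lam + (j : ℤ) • P.root i)
  else 0

/-- The Demazure operator `T_β^0 : ℤ[M] → ℤ[M]` for the root `β = P.root i`. -/
noncomputable def TZero {ι M N : Type*} [AddCommGroup M] [AddCommGroup N]
    (P : RootPairing ι ℤ M N) (i : ι) :
    AddMonoidAlgebra ℤ M →ₗ[ℤ] AddMonoidAlgebra ℤ M :=
  Finsupp.lift (AddMonoidAlgebra ℤ M) ℤ M (demazureTerm P i) ∘ₗ
    (AddMonoidAlgebra.coeffLinearEquiv ℤ : AddMonoidAlgebra ℤ M ≃ₗ[ℤ] (M →₀ ℤ)).toLinearMap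

/-- The operator `T_β^1 : ℤ[M] → ℤ[M]`, `e^λ ↦ e^{s_β λ}`, for the root `β = P.root i`. -/
noncomputable def TOne {ι M N : Type*} [AddCommGroup M] [AddCommGroup N]
    (P : RootPairing ι ℤ M N) (i : ι) :
    AddMonoidAlgebra ℤ M →ₗ[ℤ] AddMonoidAlgebra ℤ M :=
  Finsupp.lift (AddMonoidAlgebra ℤ M) ℤ M (fun lam => expWeight (P.reflection i lam)) ∘ₗ
    (AddMonoidAlgebra.coeffLinearEquiv ℤ : AddMonoidAlgebra ℤ M ≃ₗ[ℤ] (M →₀ ℤ)).toLinearMap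

/-- `T_β^ε`: the operator `T_β^1` if `ε = 1` (`true`) and the Demazure operator `T_β^0`
if `ε = 0` (`false`). -/
noncomputable def Tsel {ι M N : Type*} [AddCommGroup M] [AddCommGroup N]
    (P : RootPairing ι ℤ M N) (i : ι) :
    Bool → (AddMonoidAlgebra ℤ M →ₗ[ℤ] AddMonoidAlgebra ℤ M)
  | true => TOne P i
  | false => TZero P i

/-- The coefficient `R^{λ,ε}_{μ_1,…,μ_k} = T_{μ_1}^{ε_1} ∘ ⋯ ∘ T_{μ_k}^{ε_k} (e^λ)`
(the operator `T_{μ_k}^{ε_k}` is applied first). -/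
noncomputable def Rcoef {ι M N : Type*} [AddCommGroup M] [AddCommGroup N]
    (P : RootPairing ι ℤ M N) {k : ℕ} (μ : Fin k → ι) (ε : Fin k → Bool) (lam : M) :
    AddMonoidAlgebra ℤ M :=
  ((List.finRange k).map fun j => Tsel P (μ j) (ε j)).foldr (fun T x => T x)
    (expWeight lam)

/- ### Auxiliary lemmas -/

lemma expWeight_mul {M : Type*} [AddCommGroup M] (a b : M) :
    expWeight a * expWeight b = expWeight (a + b) := by
  simp [expWeight, AddMonoidAlgebra.single_mul_single]

lemma expWeight_mul_one_sub {M : Type*} [AddCommGroup M] (x β : M) :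
    expWeight x * (1 - expWeight (-β)) = expWeight x - expWeight (x - β) := by
  rw [mul_sub, mul_one, expWeight_mul, ← sub_eq_add_neg]

lemma lift_exp {M : Type*} [AddCommGroup M] (f : M → AddMonoidAlgebra ℤ M) (lam : M) :
    Finsupp.lift (AddMonoidAlgebra ℤ M) ℤ M f
      (AddMonoidAlgebra.coeffLinearEquiv ℤ (expWeight lam)) = f lam := by
  rw [AddMonoidAlgebra.coeffLinearEquiv_apply, expWeight, AddMonoidAlgebra.coeff_single,
    Finsupp.lift_apply, Finsupp.sum_single_index] <;> simp

lemma TOne_exp {ι M N : Type*} [AddCommGroup M] [AddCommGroup N]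
    (P : RootPairing ι ℤ M N) (i : ι) (lam : M) :
    TOne P i (expWeight lam) = expWeight (P.reflection i lam) :=
  lift_exp _ lam

lemma TZero_exp {ι M N : Type*} [AddCommGroup M] [AddCommGroup N]
    (P : RootPairing ι ℤ M N) (i : ι) (lam : M) :
    TZero P i (expWeight lam) = demazureTerm P i lam :=
  lift_exp _ lam

lemma sum_Icc_one {A : Type*} [AddCommGroup A] (g : ℕ → A) (m : ℕ) :
    ∑ j ∈ Finset.Icc 1 m, g j = ∑ j ∈ Finset.range m, g (j + 1) := by
  induction m with
  | zero => simp
  | succ m ih => rw [Finset.sum_Icc_succ_top (by omega), ih, Finset.sum_range_succ]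

lemma key_single {ι M N : Type*} [AddCommGroup M] [AddCommGroup N]
    (P : RootPairing ι ℤ M N) (i : ι) (lam : M) :
    expWeight lam
      = expWeight (P.reflection i lam)
        + demazureTerm P i lam * (1 - expWeight (-(P.root i))) := by
  rw [P.reflection_apply]
  unfold demazureTerm
  rcases lt_trichotomy (P.coroot' i lam) 0 with h | h | h
  · rw [if_neg (by omega), if_pos h]
    set m := (-(P.coroot' i lam)).toNat with hm
    have hmn : (m : ℤ) = -(P.coroot' i lam) := Int.toNat_of_nonneg (by omega)
    rw [sum_Icc_one (fun j => expWeight (lam + (j : ℤ) • P.root i)) m]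
    have hterm : (∑ j ∈ Finset.range m, expWeight (lam + ((j : ℕ) + 1 : ℤ) • P.root i))
          * (1 - expWeight (-(P.root i)))
        = ∑ j ∈ Finset.range m,
            (expWeight (lam + ((j : ℕ) + 1 : ℤ) • P.root i)
              - expWeight (lam + (j : ℤ) • P.root i)) := by
      rw [Finset.sum_mul]
      refine Finset.sum_congr rfl fun j _ => ?_
      rw [expWeight_mul_one_sub]
      congr 2
      rw [add_smul, one_smul]
      abel
    push_cast
    rw [neg_mul, hterm]
    have hts := Finset.sum_range_sub (fun j => expWeight (lam + (j : ℤ) • P.root i)) m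
    push_cast at hts
    rw [hts]
    have h1 : lam + (m : ℤ) • P.root i = lam - P.coroot' i lam • P.root i := by
      rw [hmn]; module
    rw [h1]
    simp only [zero_smul, add_zero]
    abel
  · rw [if_neg (by omega), if_neg (by omega), h]
    simp
  · rw [if_pos h]
    set m := (P.coroot' i lam).toNat with hm
    have hmn : (m : ℤ) = P.coroot' i lam := Int.toNat_of_nonneg (by omega)
    have hterm : (∑ j ∈ Finset.range m, expWeight (lam - (j : ℤ) • P.root i))
          * (1 - expWeight (-(P.root i)))
        = ∑ j ∈ Finset.range m,
            (expWeight (lam - (j : ℤ) • P.root i)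
              - expWeight (lam - ((j : ℕ) + 1 : ℤ) • P.root i)) := by
      rw [Finset.sum_mul]
      refine Finset.sum_congr rfl fun j _ => ?_
      rw [expWeight_mul_one_sub]
      congr 2
      rw [add_smul, one_smul]
      abel
    rw [hterm]
    have := Finset.sum_range_sub' (fun j => expWeight (lam - (j : ℤ) • P.root i)) m
    push_cast at this ⊢
    rw [this]
    have h0 : lam - ((0 : ℕ) : ℤ) • P.root i = lam := by push_cast; module
    have hmn' : lam - (m : ℤ) • P.root i = lam - P.coroot' i lam • P.root i := by
      rw [hmn]
    push_cast at h0 hmn'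
    rw [h0, hmn']
    abel

lemma key {ι M N : Type*} [AddCommGroup M] [AddCommGroup N]
    (P : RootPairing ι ℤ M N) (i : ι) (x : AddMonoidAlgebra ℤ M) :
    x = TOne P i x + TZero P i x * (1 - expWeight (-(P.root i))) := by
  induction x using AddMonoidAlgebra.induction_linear with
  | zero => simp
  | add f g hf hg =>
    rw [map_add, map_add, add_mul]
    nth_rewrite 1 [hf, hg]
    abel
  | single a b =>
    have hb : (AddMonoidAlgebra.single a b : AddMonoidAlgebra ℤ M) = b • expWeight a := by
      simp [expWeight, AddMonoidAlgebra.smul_single]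
    rw [hb, map_smul, map_smul, TOne_exp, TZero_exp, smul_mul_assoc, ← smul_add,
      ← key_single]

lemma Rcoef_cons {ι M N : Type*} [AddCommGroup M] [AddCommGroup N]
    (P : RootPairing ι ℤ M N) {k : ℕ} (μ : Fin (k + 1) → ι) (b : Bool)
    (ε' : Fin k → Bool) (lam : M) :
    Rcoef P μ (Fin.cons b ε') lam
      = Tsel P (μ 0) b (Rcoef P (fun j => μ j.succ) (fun j => ε' j) lam) := by
  unfold Rcoef
  rw [List.finRange_succ, List.map_cons, List.foldr_cons, List.map_map]
  simp [Function.comp_def, Fin.cons_succ, Fin.cons_zero]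

/-- `e^λ = ∑_{ε ∈ {0,1}^k} R^{λ,ε} ∏_{ε_i = 0} (1 - e^{-μ_i})` — the
restriction at the fixed point `(0,…,0)` of the decomposition of the line bundle `L_λ`
on the Bott–Samelson variety `Γ(μ_1,…,μ_k)`. -/
theorem bott_samelson_line_bundle_restriction_at_zero
    {ι M N : Type*} [AddCommGroup M] [Module.Free ℤ M] [Module.Finite ℤ M]
    [AddCommGroup N] (P : RootPairing ι ℤ M N)
    (k : ℕ) (μ : Fin k → ι) (lam : M) :
    expWeight lam
      = ∑ ε : Fin k → Bool,
          Rcoef P μ ε lam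
            * ∏ i ∈ Finset.univ.filter (fun i : Fin k => ε i = false),
                (1 - expWeight (-(P.root (μ i)))) := by
  induction k with
  | zero => simp [Rcoef]
  | succ k ih =>
    have hsum : ∀ f : (Fin (k + 1) → Bool) → AddMonoidAlgebra ℤ M,
        ∑ ε, f ε = ∑ b : Bool, ∑ ε' : Fin k → Bool, f (Fin.cons b ε') := by
      intro f
      rw [← Fintype.sum_prod_type (f := fun p : Bool × (Fin k → Bool) => f (Fin.cons p.1 p.2))]
      exact (Fintype.sum_equiv (Fin.consEquiv (fun _ : Fin (k + 1) => Bool)) _ _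
        (fun p => rfl)).symm
    rw [hsum]
    have hprod : ∀ (b : Bool) (ε' : Fin k → Bool),
        (∏ i ∈ Finset.univ.filter (fun i : Fin (k + 1) => (Fin.cons b ε' : Fin (k+1) → Bool) i = false),
            (1 - expWeight (-(P.root (μ i)))))
          = (if b = false then (1 - expWeight (-(P.root (μ 0)))) else 1)
            * ∏ i ∈ Finset.univ.filter (fun i : Fin k => ε' i = false),
                (1 - expWeight (-(P.root (μ i.succ)))) := by
      intro b ε'
      rw [Finset.prod_filter, Fin.prod_univ_succ, ← Finset.prod_filter]
      simp [Fin.cons_succ, Fin.cons_zero]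
    calc expWeight lam
        = ∑ ε' : Fin k → Bool,
            Rcoef P (fun j => μ j.succ) ε' lam
              * ∏ i ∈ Finset.univ.filter (fun i : Fin k => ε' i = false),
                  (1 - expWeight (-(P.root (μ i.succ)))) := ih (fun j => μ j.succ)
      _ = ∑ b : Bool, ∑ ε' : Fin k → Bool,
            Rcoef P μ (Fin.cons b ε') lam
              * ∏ i ∈ Finset.univ.filter (fun i : Fin (k + 1) => (Fin.cons b ε' : Fin (k+1) → Bool) i = false),
                  (1 - expWeight (-(P.root (μ i)))) := by
          rw [Fintype.sum_bool]
          rw [← Finset.sum_add_distrib]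
          refine Finset.sum_congr rfl fun ε' _ => ?_
          rw [Rcoef_cons, Rcoef_cons, hprod, hprod]
          have hR' : Rcoef P (fun j => μ j.succ) ε' lam
              = Rcoef P (fun j => μ j.succ) (fun j => ε' j) lam := rfl
          rw [hR']
          simp only [Tsel]
          rw [if_neg (show ¬(true = false) by decide), if_pos trivial, one_mul,
            ← mul_assoc, ← add_mul, ← key]
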